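/- Let c ≥ 0 and d > 0 be real numbers, and let f : ℕ → ℝ satisfy the recurrence f(k) = ((k - 1 + c)/(k + c + d))·f(k-1) for every integer k ≥ 2. Then i^{d+1}·f(i) converges to f(1)·Γ(2 + c + d)/Γ(1 + c) as i → ∞; in particular, if f(1) > 0 then f(i) is asymptotically proportional to i^{-(1+d)}. -/

import Mathlib

open Filter Finset Real Topology

private lemma aux_div_tendsto_one (a b : ℝ) :
    Tendsto (fun n : ℕ => ((n : ℝ) + a) / ((n : ℝ) + b)) atTop (𝓝 1) := by
  have h0 : Tendsto (fun n : ℕ => (a - b) / ((n : ℝ) + b)) atTop (𝓝 0) := by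
    apply Tendsto.div_atTop tendsto_const_nhds
    exact tendsto_atTop_add_const_right _ b tendsto_natCast_atTop_atTop
  have h1 : Tendsto (fun n : ℕ => 1 + (a - b) / ((n : ℝ) + b)) atTop (𝓝 1) := by
    simpa using h0.const_add 1
  apply h1.congr'
  filter_upwards [eventually_gt_atTop ⌈|b|⌉₊] with n hn
  have hnb : (0:ℝ) < (n:ℝ) + b := by
    have h2 : |b| < (n:ℝ) := by
      calc |b| ≤ (⌈|b|⌉₊ : ℝ) := Nat.le_ceil _
      _ < n := by exact_mod_cast hn
    nlinarith [neg_abs_le b]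
  field_simp
  ring

/-- Power-law tail asymptotics of the solution of the recurrence
`f k = ((k - 1 + c)/(k + c + d)) * f (k-1)` for `k ≥ 2`:
`i^(d+1) * f i → f 1 * Γ(2+c+d)/Γ(1+c)`. -/
theorem power_law_tail (c d : ℝ) (hc : 0 ≤ c) (hd : 0 < d) (f : ℕ → ℝ)
    (hrec : ∀ k : ℕ, 2 ≤ k →
      f k = (((k : ℝ) - 1 + c) / ((k : ℝ) + c + d)) * f (k - 1)) :
    Filter.Tendsto (fun i : ℕ => (i : ℝ) ^ (d + 1) * f i) Filter.atTop
      (nhds (f 1 * Real.Gamma (2 + c + d) / Real.Gamma (1 + c))) := by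
  -- closed form
  have hform : ∀ n : ℕ, f (n + 1) =
      f 1 * ∏ j ∈ Finset.range n, ((1 + c + (j:ℝ)) / (2 + c + d + (j:ℝ))) := by
    intro n
    induction n with
    | zero => simp
    | succ n ih =>
      have h := hrec (n + 2) (by omega)
      have hn2 : (n + 2) - 1 = n + 1 := by omega
      rw [hn2] at h
      rw [show n + 1 + 1 = n + 2 from rfl, h, ih, Finset.prod_range_succ]
      push_cast
      ring
  have hPpos : ∀ m : ℕ, 0 < ∏ j ∈ Finset.range m, (1 + c + (j:ℝ)) := by
    intro m
    refine Finset.prod_pos fun j _ => ?_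
    have : (0:ℝ) ≤ j := j.cast_nonneg
    linarith
  have hQpos : ∀ m : ℕ, 0 < ∏ j ∈ Finset.range m, (2 + c + d + (j:ℝ)) := by
    intro m
    refine Finset.prod_pos fun j _ => ?_
    have : (0:ℝ) ≤ j := j.cast_nonneg
    linarith
  -- GammaSeq ratio tends to Gamma ratio
  have hΓ : (0:ℝ) < Real.Gamma (1 + c) := Real.Gamma_pos_of_pos (by linarith)
  have hR : Tendsto (fun n => Real.GammaSeq (2 + c + d) n / Real.GammaSeq (1 + c) n)
      atTop (𝓝 (Real.Gamma (2 + c + d) / Real.Gamma (1 + c))) :=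
    (Real.GammaSeq_tendsto_Gamma _).div (Real.GammaSeq_tendsto_Gamma _) hΓ.ne'
  -- limits of correction factors
  have hcor1 : Tendsto (fun n : ℕ => (((n:ℝ) + 1) / (n:ℝ)) ^ (d + 1)) atTop (𝓝 1) := by
    have h := (aux_div_tendsto_one 1 0).rpow_const (Or.inl one_ne_zero) (p := d + 1)
    simpa using h
  have hcor2 : Tendsto (fun n : ℕ => (2 + c + d + (n:ℝ)) / (1 + c + (n:ℝ))) atTop (𝓝 1) := by
    have h := aux_div_tendsto_one (2 + c + d) (1 + c)
    refine h.congr fun n => by ring_nf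
  -- limit of the shifted sequence
  have hmain : Tendsto (fun n : ℕ => ((n + 1 : ℕ) : ℝ) ^ (d + 1) * f (n + 1)) atTop
      (𝓝 (f 1 * Real.Gamma (2 + c + d) / Real.Gamma (1 + c))) := by
    have hlim : Tendsto (fun n : ℕ =>
        (f 1 * (Real.GammaSeq (2 + c + d) n / Real.GammaSeq (1 + c) n)) *
        ((((n:ℝ) + 1) / (n:ℝ)) ^ (d + 1) * ((2 + c + d + (n:ℝ)) / (1 + c + (n:ℝ)))))
        atTop (𝓝 ((f 1 * (Real.Gamma (2 + c + d) / Real.Gamma (1 + c))) * (1 * 1))) :=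
      ((hR.const_mul (f 1)).mul (hcor1.mul hcor2))
    rw [show (f 1 * (Real.Gamma (2 + c + d) / Real.Gamma (1 + c))) * (1 * 1)
        = f 1 * Real.Gamma (2 + c + d) / Real.Gamma (1 + c) by ring] at hlim
    refine hlim.congr' ?_
    filter_upwards [eventually_ge_atTop 1] with n hn
    have hx : (0:ℝ) < (n:ℝ) := by exact_mod_cast hn
    have hfact : (0:ℝ) < (n.factorial : ℝ) := by exact_mod_cast Nat.factorial_pos n
    have hp := hPpos n
    have hq := hQpos n
    have hcn : (0:ℝ) < 1 + c + (n:ℝ) := by linarith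
    have hcdn : (0:ℝ) < 2 + c + d + (n:ℝ) := by linarith
    have hx1 : (0:ℝ) < (n:ℝ) ^ (1 + c) := Real.rpow_pos_of_pos hx _
    have hxd : (0:ℝ) < (n:ℝ) ^ (d + 1) := Real.rpow_pos_of_pos hx _
    rw [Real.GammaSeq, Real.GammaSeq, hform n, Finset.prod_div_distrib,
      Finset.prod_range_succ, Finset.prod_range_succ,
      show (2 + c + d : ℝ) = (1 + c) + (d + 1) by ring,
      Real.rpow_add hx (1 + c) (d + 1),
      Real.div_rpow (by linarith : (0:ℝ) ≤ (n:ℝ) + 1) hx.le,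
      show ((n + 1 : ℕ) : ℝ) = (n:ℝ) + 1 by push_cast; ring]
    field_simp
  exact (Filter.tendsto_add_atTop_iff_nat
    (f := fun i : ℕ => (i : ℝ) ^ (d + 1) * f i) 1).mp hmain
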